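/- Let p be a prime, let X be the Pontryagin dual of the discrete abelian group ℤ[1/p]², and let α̂ be the homeomorphic automorphism of X dual to α(a,b) = (a+b,b), i.e., α̂(χ) = χ∘α. Then the set of periodic points of α̂, namely {χ ∈ X : α̂^m(χ) = χ for some integer m ≥ 1}, is dense in X. -/

import Mathlib

def Zp (p : ℕ) : AddSubgroup ℚ where
  carrier := {q : ℚ | ∃ (k : ℤ) (n : ℕ), q * (p : ℚ) ^ n = (k : ℚ)}
  zero_mem' := ⟨0, 0, by norm_num⟩
  add_mem' := by
    rintro a b ⟨k1, n1, h1⟩ ⟨k2, n2, h2⟩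
    refine ⟨k1 * (p : ℤ) ^ n2 + k2 * (p : ℤ) ^ n1, n1 + n2, ?_⟩
    push_cast
    calc (a + b) * (p : ℚ) ^ (n1 + n2)
        = a * (p : ℚ) ^ n1 * (p : ℚ) ^ n2 + b * (p : ℚ) ^ n2 * (p : ℚ) ^ n1 := by
          rw [pow_add]; ring
      _ = (k1 : ℚ) * (p : ℚ) ^ n2 + (k2 : ℚ) * (p : ℚ) ^ n1 := by rw [h1, h2]
  neg_mem' := by
    rintro a ⟨k, n, h⟩
    refine ⟨-k, n, ?_⟩
    push_cast
    rw [neg_mul, h]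


open MeasureTheory

/-- The Pontryagin dual of the discrete abelian group `ℤ[1/p]²`: the group of characters
with values in the circle group. -/
abbrev Xp (p : ℕ) : Type := AddChar (Zp p × Zp p) Circle

/-- The topology of pointwise convergence on the dual. -/
noncomputable instance (p : ℕ) : TopologicalSpace (Xp p) :=
  TopologicalSpace.induced (fun χ : Xp p => (χ : Zp p × Zp p → Circle)) Pi.topologicalSpace

noncomputable instance (p : ℕ) : MeasurableSpace (Xp p) := borel (Xp p)

instance (p : ℕ) : BorelSpace (Xp p) := ⟨rfl⟩

/-- The automorphism `α(a,b) = (a+b, b)` of `ℤ[1/p]²`, as an additive monoid hom. -/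
def alphaHom (p : ℕ) : Zp p × Zp p →+ Zp p × Zp p where
  toFun x := (x.1 + x.2, x.2)
  map_zero' := by
    refine Prod.ext ?_ rfl
    show (0 : Zp p) + 0 = 0
    simp
  map_add' x y := by
    refine Prod.ext ?_ rfl
    show x.1 + y.1 + (x.2 + y.2) = x.1 + x.2 + (y.1 + y.2)
    abel

/-- The dual action `α̂(χ) = χ ∘ α` on the dual group. -/
noncomputable def alphaHat (p : ℕ) : Xp p → Xp p :=
  fun χ => χ.compAddMonoidHom (alphaHom p)

namespace DensePeriodicAux

open Complex

lemma abs_exp_mul_I_sub_one_le (x : ℝ) : ‖Complex.exp (x * Complex.I) - 1‖ ≤ |x| := by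
  have h1 : Complex.exp (x * Complex.I) - 1
      = ((Real.cos x - 1 : ℝ) : ℂ) + ((Real.sin x : ℝ) : ℂ) * Complex.I := by
    rw [Complex.exp_mul_I]
    push_cast
    ring
  have hs : Real.sin (x/2)^2 = (1 - Real.cos x)/2 := by
    have h := Real.abs_sin_half x
    have h2 : |Real.sin (x/2)|^2 = (1 - Real.cos x)/2 := by
      rw [h]; exact Real.sq_sqrt (by nlinarith [Real.cos_le_one x])
    simpa [sq_abs] using h2
  have hb : Real.sin (x/2)^2 ≤ (x/2)^2 := by
    have h3 := Real.abs_sin_le_abs (x := x/2)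
    nlinarith [abs_nonneg (Real.sin (x/2)), _root_.sq_abs (Real.sin (x/2)), _root_.sq_abs (x/2)]
  rw [h1, Complex.norm_add_mul_I]
  rw [show |x| = Real.sqrt (x^2) by rw [Real.sqrt_sq_eq_abs]]
  apply Real.sqrt_le_sqrt
  nlinarith [Real.sin_sq_add_cos_sq x]

lemma dist_circle_exp_le (a b : ℝ) : dist (Circle.exp a) (Circle.exp b) ≤ |a - b| := by
  change dist (Circle.exp a : ℂ) (Circle.exp b : ℂ) ≤ _
  rw [Complex.dist_eq]
  have h1 : (Circle.exp a : ℂ) - Circle.exp b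
      = Complex.exp ((b:ℝ) * Complex.I) * (Complex.exp (((a-b:ℝ)) * Complex.I) - 1) := by
    rw [Circle.coe_exp, Circle.coe_exp, mul_sub, mul_one, ← Complex.exp_add]
    push_cast
    ring_nf
  rw [h1, norm_mul, Complex.norm_exp_ofReal_mul_I, one_mul]
  exact abs_exp_mul_I_sub_one_le _

lemma pow_abs_sub (u v : ℂ) (hu : ‖u‖ = 1) (hv : ‖v‖ = 1) (n : ℕ) :
    ‖u ^ n - v ^ n‖ ≤ n * ‖u - v‖ := by
  induction n with
  | zero => simp
  | succ n ih =>
    have h1 : u ^ (n+1) - v ^ (n+1) = u ^ n * (u - v) + (u ^ n - v ^ n) * v := by ring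
    calc ‖u ^ (n+1) - v ^ (n+1)‖
        ≤ ‖u ^ n * (u - v)‖ + ‖(u ^ n - v ^ n) * v‖ := by
          rw [h1]; exact norm_add_le _ _
      _ = ‖u - v‖ + ‖u ^ n - v ^ n‖ := by
          rw [norm_mul, norm_mul, norm_pow, hu, hv, one_pow, one_mul, mul_one]
      _ ≤ ‖u - v‖ + n * ‖u - v‖ := by linarith
      _ = (n+1 : ℕ) * ‖u - v‖ := by push_cast; ring

lemma zpow_abs_sub (u v : ℂ) (hu : ‖u‖ = 1) (hv : ‖v‖ = 1) (c : ℤ) :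
    ‖u ^ c - v ^ c‖ ≤ (c.natAbs : ℝ) * ‖u - v‖ := by
  have hu0 : u ≠ 0 := by intro h; rw [h] at hu; simp at hu
  have hv0 : v ≠ 0 := by intro h; rw [h] at hv; simp at hv
  set n := c.natAbs with hn
  rcases Int.natAbs_eq c with h | h
  · rw [h, zpow_natCast, zpow_natCast]; exact pow_abs_sub u v hu hv _
  · rw [h, zpow_neg, zpow_neg, zpow_natCast, zpow_natCast]
    have h2 : (u ^ n)⁻¹ - (v ^ n)⁻¹
        = (v ^ n - u ^ n) * (u ^ n)⁻¹ * (v ^ n)⁻¹ := by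
      field_simp
    rw [h2, norm_mul, norm_mul, norm_inv, norm_inv, norm_pow, norm_pow, hu, hv, one_pow, inv_one,
      mul_one, mul_one, ← norm_neg, neg_sub]
    exact pow_abs_sub u v hu hv _


lemma Zp_mem {p : ℕ} (x : Zp p) : ∃ (k : ℤ) (n : ℕ), (x : ℚ) * (p : ℚ) ^ n = (k : ℚ) := x.2

noncomputable def kw {p : ℕ} (x : Zp p) : ℤ := (Zp_mem x).choose

noncomputable def nw {p : ℕ} (x : Zp p) : ℕ := (Zp_mem x).choose_spec.choose

lemma kw_spec {p : ℕ} (x : Zp p) : (x : ℚ) * (p : ℚ) ^ (nw x) = ((kw x : ℤ) : ℚ) :=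
  (Zp_mem x).choose_spec.choose_spec

lemma Fval_eq_aux {p m : ℕ} {w : ZMod m} (hw : (p : ZMod m) * w = 1)
    {x : Zp p} {k : ℤ} {n : ℕ} (h : (x : ℚ) * (p : ℚ) ^ n = (k : ℚ)) :
    (kw x : ZMod m) * w ^ (nw x) = (k : ZMod m) * w ^ n := by
  have hu : ∀ j : ℕ, (p : ZMod m) ^ j * w ^ j = 1 := fun j => by rw [← mul_pow, hw, one_pow]
  have hq : (kw x : ℚ) * (p : ℚ) ^ n = (k : ℚ) * (p : ℚ) ^ (nw x) := by
    rw [← kw_spec x, ← h]; ring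
  have hZ : (kw x) * (p : ℤ) ^ n = k * (p : ℤ) ^ (nw x) := by exact_mod_cast hq
  have hM : (kw x : ZMod m) * (p : ZMod m) ^ n = (k : ZMod m) * (p : ZMod m) ^ (nw x) := by
    have h2 := congrArg (fun t : ℤ => (t : ZMod m)) hZ
    push_cast at h2
    exact h2
  have e1 : ((kw x : ZMod m) * (p : ZMod m) ^ n) * (w ^ n * w ^ nw x)
      = (kw x : ZMod m) * w ^ nw x := by
    calc ((kw x : ZMod m) * (p : ZMod m) ^ n) * (w ^ n * w ^ nw x)
        = (kw x : ZMod m) * w ^ nw x * ((p : ZMod m) ^ n * w ^ n) := by ring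
      _ = (kw x : ZMod m) * w ^ nw x := by rw [hu, mul_one]
  have e2 : ((k : ZMod m) * (p : ZMod m) ^ (nw x)) * (w ^ n * w ^ nw x)
      = (k : ZMod m) * w ^ n := by
    calc ((k : ZMod m) * (p : ZMod m) ^ (nw x)) * (w ^ n * w ^ nw x)
        = (k : ZMod m) * w ^ n * ((p : ZMod m) ^ (nw x) * w ^ (nw x)) := by ring
      _ = (k : ZMod m) * w ^ n := by rw [hu, mul_one]
  rw [← e1, hM, e2]

noncomputable def Fhom (p : ℕ) {m : ℕ} (w : ZMod m) (hw : (p : ZMod m) * w = 1) :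
    Zp p →+ ZMod m where
  toFun x := (kw x : ZMod m) * w ^ (nw x)
  map_zero' := by
    have h0 : ((0 : Zp p) : ℚ) * (p : ℚ) ^ (0 : ℕ) = ((0 : ℤ) : ℚ) := by simp
    show (kw (0 : Zp p) : ZMod m) * w ^ nw (0 : Zp p) = 0
    rw [Fval_eq_aux hw h0]
    simp
  map_add' x y := by
    have hu : ∀ j : ℕ, (p : ZMod m) ^ j * w ^ j = 1 := fun j => by rw [← mul_pow, hw, one_pow]
    have hxy : ((x + y : Zp p) : ℚ) * (p : ℚ) ^ (nw x + nw y)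
        = ((kw x * (p : ℤ) ^ (nw y) + kw y * (p : ℤ) ^ (nw x) : ℤ) : ℚ) := by
      push_cast
      rw [pow_add]
      calc ((x : ℚ) + (y : ℚ)) * ((p : ℚ) ^ nw x * (p : ℚ) ^ nw y)
          = ((x : ℚ) * (p : ℚ) ^ nw x) * (p : ℚ) ^ nw y
            + ((y : ℚ) * (p : ℚ) ^ nw y) * (p : ℚ) ^ nw x := by ring
        _ = (kw x : ℚ) * (p : ℚ) ^ nw y + (kw y : ℚ) * (p : ℚ) ^ nw x := by
            rw [kw_spec x, kw_spec y]
    show (kw (x + y) : ZMod m) * w ^ nw (x + y)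
      = (kw x : ZMod m) * w ^ nw x + (kw y : ZMod m) * w ^ nw y
    rw [Fval_eq_aux hw hxy]
    push_cast
    rw [pow_add]
    calc ((kw x : ZMod m) * (p : ZMod m) ^ nw y + (kw y : ZMod m) * (p : ZMod m) ^ nw x)
          * (w ^ nw x * w ^ nw y)
        = (kw x : ZMod m) * w ^ nw x * ((p : ZMod m) ^ nw y * w ^ nw y)
          + (kw y : ZMod m) * w ^ nw y * ((p : ZMod m) ^ nw x * w ^ nw x) := by ring
      _ = (kw x : ZMod m) * w ^ nw x + (kw y : ZMod m) * w ^ nw y := by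
          rw [hu, hu, mul_one, mul_one]

lemma Fhom_eq {p m : ℕ} {w : ZMod m} (hw : (p : ZMod m) * w = 1)
    (x : Zp p) (k : ℤ) (n : ℕ) (h : (x : ℚ) * (p : ℚ) ^ n = (k : ℚ)) :
    Fhom p w hw x = (k : ZMod m) * w ^ n := Fval_eq_aux hw h

open Complex in
lemma circle_coe_zpow (z : Circle) (n : ℤ) : ((z ^ n : Circle) : ℂ) = (z : ℂ) ^ n := by
  rcases n with n | n
  · show ((z ^ (n : ℤ) : Circle) : ℂ) = (z : ℂ) ^ (n : ℤ)
    rw [zpow_natCast, zpow_natCast, Circle.coe_pow]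
  · rw [zpow_negSucc, zpow_negSucc, Circle.coe_inv, Circle.coe_pow]

noncomputable def psi1 (p : ℕ) {m : ℕ} [NeZero m] (w : ZMod m) (hw : (p : ZMod m) * w = 1)
    (c : ZMod m) : AddChar (Zp p) Circle :=
  ZMod.toCircle.compAddMonoidHom ((AddMonoidHom.mulLeft c).comp (Fhom p w hw))

lemma psi1_apply (p : ℕ) {m : ℕ} [NeZero m] (w : ZMod m) (hw : (p : ZMod m) * w = 1)
    (c : ZMod m) (x : Zp p) : psi1 p w hw c x = ZMod.toCircle (c * Fhom p w hw x) := rfl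

lemma psi1_kill (p : ℕ) {m : ℕ} [NeZero m] (w : ZMod m) (hw : (p : ZMod m) * w = 1)
    (c : ZMod m) (b : Zp p) : psi1 p w hw c (m • b) = 1 := by
  have hF : (Fhom p w hw) (m • b) = 0 := by
    rw [AddMonoidHom.map_nsmul, nsmul_eq_mul, ZMod.natCast_self, zero_mul]
  rw [psi1_apply, hF, mul_zero, AddChar.map_zero_eq_one]

lemma iterate_alphaHat (p : ℕ) (χ : Xp p) (k : ℕ) (y : Zp p × Zp p) :
    ((alphaHat p)^[k] χ) y = χ (y.1 + k • y.2, y.2) := by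
  induction k generalizing χ with
  | zero => simp
  | succ k ih =>
    rw [Function.iterate_succ_apply, ih (alphaHat p χ)]
    show χ ((y.1 + k • y.2) + y.2, y.2) = _
    congr 2
    rw [succ_nsmul, ← add_assoc]

lemma exists_eps {α β : Type*} [PseudoMetricSpace β] (I : Finset α) (f : α → β)
    (u : α → Set β) (h : ∀ a ∈ I, IsOpen (u a) ∧ f a ∈ u a) :
    ∃ ε > 0, ∀ a ∈ I, Metric.ball (f a) ε ⊆ u a := by
  classical
  induction I using Finset.induction_on with
  | empty => exact ⟨1, one_pos, by simp⟩
  | @insert a s ha ih =>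
    obtain ⟨ε, hε, hball⟩ := ih (fun b hb => h b (Finset.mem_insert_of_mem hb))
    obtain ⟨ho, hm⟩ := h a (Finset.mem_insert_self a s)
    obtain ⟨ε', hε', hb'⟩ := Metric.isOpen_iff.mp ho _ hm
    refine ⟨min ε ε', lt_min hε hε', ?_⟩
    intro b hb
    rcases Finset.mem_insert.mp hb with rfl | hb
    · exact (Metric.ball_subset_ball (min_le_right _ _)).trans hb'
    · exact (Metric.ball_subset_ball (min_le_left _ _)).trans (hball b hb)

open Real in
lemma toCircle_int_eq_exp {m : ℕ} [NeZero m] (r : ℤ) :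
    ZMod.toCircle ((r : ZMod m)) = Circle.exp (2 * π * r / m) := by
  apply Circle.ext
  rw [ZMod.toCircle_intCast, Circle.coe_exp]
  push_cast
  ring_nf

open Real in
lemma approx (p : ℕ) (hp : p.Prime) (χ : Xp p) (I : Finset (Zp p × Zp p)) (ε : ℝ)
    (hε : 0 < ε) :
    ∃ ψ : Xp p, (∃ m : ℕ, 1 ≤ m ∧ (alphaHat p)^[m] ψ = ψ) ∧
      ∀ x ∈ I, dist (ψ x) (χ x) < ε := by
  classical
  have hp0 : (p : ℚ) ≠ 0 := Nat.cast_ne_zero.mpr hp.ne_zero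
  set N : ℕ := I.sup fun x => nw x.1 with hN
  set g : Zp p := ⟨1 / (p : ℚ) ^ N, 1, N, by field_simp; norm_num⟩ with hg
  set c : Zp p × Zp p → ℤ := fun x => kw x.1 * (p : ℤ) ^ (N - nw x.1) with hc
  have hcx : ∀ x ∈ I, x.1 = c x • g := by
    intro x hx
    have hle : nw x.1 ≤ N := Finset.le_sup (f := fun x : Zp p × Zp p => nw x.1) hx
    apply Subtype.ext
    have hz : ((c x • g : Zp p) : ℚ) = (c x : ℚ) * (1 / (p : ℚ) ^ N) := by
      push_cast
      rw [zsmul_eq_mul]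
    rw [hz]
    have hpow : (p : ℚ) ^ N = (p : ℚ) ^ (nw x.1) * (p : ℚ) ^ (N - nw x.1) := by
      rw [← pow_add, Nat.add_sub_cancel' hle]
    have hks := kw_spec x.1
    have hp0' : (p : ℚ) ^ N ≠ 0 := pow_ne_zero _ hp0
    field_simp
    rw [hpow]
    push_cast
    calc (x.1 : ℚ) * ((p : ℚ) ^ nw x.1 * (p : ℚ) ^ (N - nw x.1))
        = ((x.1 : ℚ) * (p : ℚ) ^ nw x.1) * (p : ℚ) ^ (N - nw x.1) := by ring
      _ = (kw x.1 : ℚ) * (p : ℚ) ^ (N - nw x.1) := by rw [hks]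
      _ = ((c x : ℤ) : ℚ) := by rw [hc]; push_cast; ring
  set C : ℕ := (I.sup fun x => (c x).natAbs) + 1 with hC
  have hCpos : (0 : ℝ) < C := by positivity
  set δ : ℝ := ε / C with hδdef
  have hδ : 0 < δ := div_pos hε hCpos
  set M₀ : ℕ := ⌈π / δ⌉₊ + 1 with hM₀
  set m : ℕ := if p ∣ M₀ then M₀ + 1 else M₀ with hm
  have hmM : M₀ ≤ m := by
    rw [hm]; split <;> omega
  have hm1 : 1 ≤ m := by omega
  have hpm : ¬ p ∣ m := by
    rw [hm]
    split
    · rename_i h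
      intro h'
      have h1 : p ∣ 1 := by simpa using Nat.dvd_sub h' h
      exact absurd (Nat.dvd_one.mp h1) hp.ne_one
    · rename_i h
      exact h
  haveI : NeZero m := ⟨by omega⟩
  have hm0r : (0 : ℝ) < m := by exact_mod_cast hm1
  have hπδ : π / δ < (m : ℝ) := by
    have h1 : π / δ ≤ (⌈π / δ⌉₊ : ℝ) := Nat.le_ceil _
    have h2 : ((⌈π / δ⌉₊ : ℕ) : ℝ) < M₀ := by exact_mod_cast Nat.lt_succ_self _
    have h3 : ((M₀ : ℕ) : ℝ) ≤ m := by exact_mod_cast hmM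
    linarith
  have hπm : π / (m : ℝ) < δ := by
    rw [div_lt_iff₀ hm0r]
    rw [div_lt_iff₀ hδ] at hπδ
    linarith
  have hcop : Nat.Coprime p m := (Nat.Prime.coprime_iff_not_dvd hp).2 hpm
  obtain ⟨u, hu⟩ := (ZMod.isUnit_iff_coprime p m).2 hcop
  set w : ZMod m := ((u⁻¹ : (ZMod m)ˣ) : ZMod m) with hwdef
  have hw : (p : ZMod m) * w = 1 := by rw [← hu]; exact u.mul_inv
  have hun : ∀ j : ℕ, (p : ZMod m) ^ j * w ^ j = 1 := fun j => by rw [← mul_pow, hw, one_pow]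
  set z : Circle := χ (g, 0) with hzdef
  set θ : ℝ := Complex.arg (z : ℂ) with hθ
  set r : ℤ := round (θ * m / (2 * π)) with hr
  set ζ : Circle := ZMod.toCircle ((r : ZMod m)) with hζ
  have hζexp : ζ = Circle.exp (2 * π * r / m) := toCircle_int_eq_exp r
  have hzexp : Circle.exp θ = z := Circle.exp_arg z
  have hζz : dist ζ z ≤ π / m := by
    rw [hζexp, ← hzexp]
    refine (dist_circle_exp_le _ _).trans ?_
    have h6 : |θ * m / (2 * π) - r| ≤ 1 / 2 := abs_sub_round _
    have h7 : 2 * π * (r : ℝ) / m - θ = -(2 * π / m * (θ * m / (2 * π) - r)) := by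
      field_simp
      ring
    rw [h7, abs_neg, abs_mul]
    have h8 : |2 * π / (m : ℝ)| = 2 * π / m := abs_of_pos (by positivity)
    rw [h8]
    calc 2 * π / (m : ℝ) * |θ * m / (2 * π) - r| ≤ 2 * π / m * (1 / 2) := by
          apply mul_le_mul_of_nonneg_left h6 (by positivity)
      _ = π / m := by ring
  have hζzδ : dist ζ z < δ := lt_of_le_of_lt hζz hπm
  set c₀ : ZMod m := (r : ZMod m) * (p : ZMod m) ^ N with hc₀
  have hgN : ((g : ℚ)) * (p : ℚ) ^ N = ((1 : ℤ) : ℚ) := by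
    rw [hg]
    push_cast
    field_simp
  have hψ₁g : psi1 p w hw c₀ g = ζ := by
    rw [psi1_apply, Fhom_eq hw g 1 N hgN]
    rw [hζ]
    congr 1
    rw [Int.cast_one, one_mul, hc₀]
    calc (r : ZMod m) * (p : ZMod m) ^ N * w ^ N
        = (r : ZMod m) * ((p : ZMod m) ^ N * w ^ N) := by ring
      _ = (r : ZMod m) := by rw [hun, mul_one]
  set ψ : Xp p := (psi1 p w hw c₀).compAddMonoidHom (AddMonoidHom.fst (Zp p) (Zp p)) *
      χ.compAddMonoidHom ((AddMonoidHom.inr (Zp p) (Zp p)).comp (AddMonoidHom.snd (Zp p) (Zp p)))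
      with hψdef
  have happ : ∀ a b : Zp p, ψ (a, b) = psi1 p w hw c₀ a * χ (0, b) := by
    intro a b
    rw [hψdef, AddChar.mul_apply, AddChar.compAddMonoidHom_apply, AddChar.compAddMonoidHom_apply]
    rfl
  refine ⟨ψ, ⟨m, hm1, ?_⟩, ?_⟩
  · apply DFunLike.ext
    intro y
    rw [iterate_alphaHat]
    calc ψ (y.1 + m • y.2, y.2) = psi1 p w hw c₀ (y.1 + m • y.2) * χ (0, y.2) := happ _ _
      _ = psi1 p w hw c₀ y.1 * χ (0, y.2) := by
          rw [AddChar.map_add_eq_mul, psi1_kill, mul_one]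
      _ = ψ (y.1, y.2) := (happ _ _).symm
      _ = ψ y := by rw [Prod.mk.eta]
  · intro x hx
    have hψx : ψ x = psi1 p w hw c₀ x.1 * χ (0, x.2) := by
      rw [← happ, Prod.mk.eta]
    have hχx : χ x = χ (x.1, 0) * χ (0, x.2) := by
      rw [← AddChar.map_add_eq_mul]
      congr 1
      exact Prod.ext (by simp) (by simp)
    have h3 : psi1 p w hw c₀ x.1 = ζ ^ (c x) := by
      rw [hcx x hx, AddChar.map_zsmul_eq_zpow, hψ₁g]
    have h4 : χ (x.1, 0) = z ^ (c x) := by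
      have h8 : ((x.1, (0 : Zp p)) : Zp p × Zp p) = c x • ((g, 0) : Zp p × Zp p) := by
        rw [Prod.smul_mk, smul_zero, hcx x hx]
      rw [h8, AddChar.map_zsmul_eq_zpow, hzdef]
    have hclose : dist (ψ x) (χ x) ≤ (((c x).natAbs : ℝ)) * dist ζ z := by
      change dist (ψ x : ℂ) (χ x : ℂ) ≤ _ * dist (ζ : ℂ) (z : ℂ)
      rw [Complex.dist_eq, hψx, hχx, h3, h4]
      rw [Circle.coe_mul, Circle.coe_mul, circle_coe_zpow, circle_coe_zpow]
      rw [show (ζ : ℂ) ^ (c x) * ((χ (0, x.2) : Circle) : ℂ)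
            - (z : ℂ) ^ (c x) * ((χ (0, x.2) : Circle) : ℂ)
          = ((ζ : ℂ) ^ (c x) - (z : ℂ) ^ (c x)) * ((χ (0, x.2) : Circle) : ℂ) by ring]
      rw [norm_mul]
      rw [Circle.norm_coe, mul_one]
      rw [Complex.dist_eq]
      exact zpow_abs_sub _ _ (Circle.norm_coe ζ) (Circle.norm_coe z) (c x)
    have hCc : ((c x).natAbs : ℝ) ≤ C := by
      have : (c x).natAbs ≤ C := le_trans (Finset.le_sup (f := fun x => (c x).natAbs) hx)
        (Nat.le_succ _)
      exact_mod_cast this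
    calc dist (ψ x) (χ x) ≤ (((c x).natAbs : ℝ)) * dist ζ z := hclose
      _ ≤ (C : ℝ) * dist ζ z := mul_le_mul_of_nonneg_right hCc dist_nonneg
      _ < (C : ℝ) * δ := by exact mul_lt_mul_of_pos_left hζzδ hCpos
      _ = ε := by
          rw [hδdef]
          field_simp

end DensePeriodicAux


/-- the periodic points of the dual action `α̂` are dense in the dual
of `ℤ[1/p]²`. -/
theorem dense_periodic_points (p : ℕ) (hp : p.Prime) :
    Dense {χ : Xp p | ∃ m : ℕ, 1 ≤ m ∧ (alphaHat p)^[m] χ = χ} := by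
  classical
  rw [dense_iff_inter_open]
  intro U hU hUne
  have hind : Topology.IsInducing (fun χ : Xp p => (χ : Zp p × Zp p → Circle)) := ⟨rfl⟩
  obtain ⟨χ₀, hχ₀U⟩ := hUne
  obtain ⟨V, hV, rfl⟩ := hind.isOpen_iff.mp hU
  have hmem : (fun χ : Xp p => (χ : Zp p × Zp p → Circle)) χ₀ ∈ V := hχ₀U
  obtain ⟨I, u, h1, h2⟩ := isOpen_pi_iff.mp hV _ hmem
  obtain ⟨ε, hε, hball⟩ := DensePeriodicAux.exists_eps I (⇑χ₀) u h1
  obtain ⟨ψ, hper, hclose⟩ := DensePeriodicAux.approx p hp χ₀ I ε hε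
  refine ⟨ψ, ?_, hper⟩
  apply h2
  intro a ha
  exact hball a (Finset.mem_coe.mp ha) (Metric.mem_ball.mpr (hclose a (Finset.mem_coe.mp ha)))
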